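/- Let y(x;a) = 1 - Σ_{n≥1} (∏_{j=0}^{n-2}(na+j)/n!) x^n (empty product = 1 for n=1, so the linear coefficient is -1). Then -log y(x;a) = φ_{-1}(x;a) = Σ_{m≥1} (∏_{j=1}^{m-1}(ma+j)/(m-1)!) m^{-1} x^m, as formal power series in x. -/

import Mathlib

open Polynomial Finset

noncomputable def Pl (f : ℕ → ℝ) (n : ℕ) : Polynomial ℝ :=
  ∏ i ∈ Finset.range n, (X + C (f i))

lemma Pl_comp_add (f : ℕ → ℝ) (t : ℝ) (n : ℕ) :
    (Pl f n).comp (X + C t) = Pl (fun i => f i + t) n := by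
  unfold Pl
  rw [Polynomial.prod_comp]
  refine Finset.prod_congr rfl fun i _ => ?_
  simp [add_comp, map_add, add_assoc, add_comm (C t)]

lemma Pl_congr {f g : ℕ → ℝ} {n : ℕ} (h : ∀ i < n, f i = g i) : Pl f n = Pl g n := by
  unfold Pl
  exact Finset.prod_congr rfl fun i hi => by rw [h i (Finset.mem_range.mp hi)]

lemma Pl_succ (f : ℕ → ℝ) (n : ℕ) : Pl f (n + 1) = Pl f n * (X + C (f n)) :=
  Finset.prod_range_succ _ _

lemma Pl_succ' (f : ℕ → ℝ) (n : ℕ) :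
    Pl f (n + 1) = (X + C (f 0)) * Pl (fun i => f (i + 1)) n := by
  unfold Pl
  rw [Finset.prod_range_succ']
  exact mul_comm _ _

lemma Pl_eval (f : ℕ → ℝ) (n : ℕ) (x : ℝ) :
    (Pl f n).eval x = ∏ i ∈ Finset.range n, (x + f i) := by
  unfold Pl
  simp [eval_prod]

noncomputable def Apoly (z : ℝ) (k : ℕ) : Polynomial ℝ :=
  if k = 0 then 1 else
    (X * Pl (fun i => (k : ℝ) * z - (i + 1)) (k - 1)) * C (1 / (Nat.factorial k : ℝ))

noncomputable def Breal (y z : ℝ) (r : ℕ) : ℝ :=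
  (∏ i ∈ Finset.range r, (y + ((r : ℝ) * z - i))) / Nat.factorial r

noncomputable def Tpoly (y z : ℝ) (n : ℕ) : Polynomial ℝ :=
  Pl (fun i => y + ((n : ℝ) * z - i)) n * C (1 / (Nat.factorial n : ℝ))

lemma X_sub_one : (X - 1 : Polynomial ℝ) = X + C (-1) := by
  rw [map_neg, map_one]; ring

lemma Apoly_rec (z : ℝ) (k : ℕ) (hk : k ≠ 0) :
    Apoly z k = (Apoly z k).comp (X - 1) + (Apoly z (k - 1)).comp (X + C (z - 1)) := by
  rcases k with _ | k; · exact absurd rfl hk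
  rcases k with _ | k
  · simp [Apoly, Pl]
  · rw [show (k + 1 + 1 : ℕ) = k + 2 from rfl, show (k + 2 - 1 : ℕ) = k + 1 from rfl]
    set Q : Polynomial ℝ := Pl (fun i => ((k : ℝ) + 2) * z - (i + 2)) k with hQ
    set F : Polynomial ℝ := C (1 / (Nat.factorial (k + 2) : ℝ)) with hF
    have hPl : Pl (fun i => ((k + 2 : ℕ) : ℝ) * z - (i + 1)) (k + 1)
        = (X + C (((k : ℝ) + 2) * z - 1)) * Q := by
      rw [Pl_succ']
      have h0 : ((k + 2 : ℕ) : ℝ) * z - (((0 : ℕ) : ℝ) + 1) = ((k : ℝ) + 2) * z - 1 := by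
        push_cast; ring
      rw [h0]
      have h1 : Pl (fun i => ((k + 2 : ℕ) : ℝ) * z - (((i + 1 : ℕ) : ℝ) + 1)) k = Q :=
        Pl_congr fun i _ => by push_cast; ring
      rw [h1]
    have E1 : Apoly z (k + 2) = X * ((X + C (((k : ℝ) + 2) * z - 1)) * Q) * F := by
      simp only [Apoly, if_neg (Nat.succ_ne_zero _)]
      rw [show (k + 2 - 1 : ℕ) = k + 1 from rfl, hPl, hF]
    have E2 : (Apoly z (k + 2)).comp (X - 1) =
        (X - 1) * (Q * (X + C (((k : ℝ) + 2) * z - ((k : ℝ) + 2)))) * F := by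
      simp only [Apoly, if_neg (Nat.succ_ne_zero _)]
      rw [show (k + 2 - 1 : ℕ) = k + 1 from rfl]
      rw [X_sub_one]
      simp only [mul_comp, X_comp, C_comp, Pl_comp_add]
      have h2 : Pl (fun i => ((k + 2 : ℕ) : ℝ) * z - (i + 1) + (-1)) (k + 1)
          = Q * (X + C (((k : ℝ) + 2) * z - ((k : ℝ) + 2))) := by
        have h3 : Pl (fun i => ((k + 2 : ℕ) : ℝ) * z - (i + 1) + (-1)) (k + 1)
            = Pl (fun i => ((k : ℝ) + 2) * z - (i + 2)) (k + 1) :=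
          Pl_congr fun i _ => by push_cast; ring
        rw [h3, Pl_succ, hQ]
      rw [h2, ← X_sub_one, hF]
    have E3 : (Apoly z (k + 1)).comp (X + C (z - 1)) =
        (X + C (z - 1)) * Q * (((k : Polynomial ℝ) + 2) * F) := by
      simp only [Apoly, if_neg (Nat.succ_ne_zero _)]
      rw [show (k + 1 - 1 : ℕ) = k from rfl]
      simp only [mul_comp, X_comp, C_comp, Pl_comp_add]
      have h2 : Pl (fun i => ((k + 1 : ℕ) : ℝ) * z - (i + 1) + (z - 1)) k = Q :=
        Pl_congr fun i _ => by push_cast; ring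
      rw [h2]
      have hfac : C ((1 : ℝ) / (Nat.factorial (k + 1) : ℝ)) =
          ((k : Polynomial ℝ) + 2) * F := by
        have h1 : (1 : ℝ) / (Nat.factorial (k + 1) : ℝ)
            = ((k : ℝ) + 2) * (1 / (Nat.factorial (k + 2) : ℝ)) := by
          rw [Nat.factorial_succ (k + 1)]
          have h5 : (Nat.factorial (k + 1) : ℝ) ≠ 0 :=
            Nat.cast_ne_zero.mpr (Nat.factorial_ne_zero _)
          push_cast
          field_simp
          ring
        rw [h1, map_mul, hF]
        congr 1
        rw [map_add, map_ofNat, map_natCast]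
      rw [hfac]
    rw [E2, E3, E1]
    simp only [map_sub, map_mul, map_add, map_one, map_ofNat, map_natCast]
    ring

lemma Tpoly_rec (y z : ℝ) (m : ℕ) :
    Tpoly y z (m + 1) =
      (Tpoly y z (m + 1)).comp (X - 1) + (Tpoly y z m).comp (X + C (z - 1)) := by
  set Q : Polynomial ℝ := Pl (fun i => y + (((m : ℝ) + 1) * z - (i + 1))) m with hQ
  set F : Polynomial ℝ := C (1 / (Nat.factorial (m + 1) : ℝ)) with hF
  have E1 : Tpoly y z (m + 1) = (X + C (y + ((m : ℝ) + 1) * z)) * Q * F := by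
    unfold Tpoly
    rw [Pl_succ']
    have h0 : y + (((m + 1 : ℕ) : ℝ) * z - ((0 : ℕ) : ℝ)) = y + ((m : ℝ) + 1) * z := by
      push_cast; ring
    rw [h0]
    have h1 : Pl (fun i => y + (((m + 1 : ℕ) : ℝ) * z - ((i + 1 : ℕ) : ℝ))) m = Q :=
      Pl_congr fun i _ => by push_cast; ring
    rw [h1, hF]
  have E2 : (Tpoly y z (m + 1)).comp (X - 1) =
      Q * (X + C (y + ((m : ℝ) + 1) * z - ((m : ℝ) + 1))) * F := by
    unfold Tpoly
    rw [X_sub_one]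
    simp only [mul_comp, C_comp, Pl_comp_add]
    have h1 : Pl (fun i => y + (((m + 1 : ℕ) : ℝ) * z - i) + (-1)) (m + 1)
        = Pl (fun i => y + (((m : ℝ) + 1) * z - (i + 1))) (m + 1) :=
      Pl_congr fun i _ => by push_cast; ring
    rw [h1, Pl_succ, hQ]
    have h2 : y + (((m : ℝ) + 1) * z - (((m : ℕ) : ℝ) + 1))
        = y + ((m : ℝ) + 1) * z - ((m : ℝ) + 1) := by push_cast; ring
    rw [h2, hF]
  have E3 : (Tpoly y z m).comp (X + C (z - 1)) = Q * (((m : Polynomial ℝ) + 1) * F) := by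
    unfold Tpoly
    simp only [mul_comp, C_comp, Pl_comp_add]
    have h1 : Pl (fun i => y + ((m : ℝ) * z - i) + (z - 1)) m = Q :=
      Pl_congr fun i _ => by push_cast; ring
    rw [h1]
    have hfac : C ((1 : ℝ) / (Nat.factorial m : ℝ)) = ((m : Polynomial ℝ) + 1) * F := by
      have h5 : (1 : ℝ) / (Nat.factorial m : ℝ)
          = ((m : ℝ) + 1) * (1 / (Nat.factorial (m + 1) : ℝ)) := by
        rw [Nat.factorial_succ m]
        have h6 : (Nat.factorial m : ℝ) ≠ 0 := Nat.cast_ne_zero.mpr (Nat.factorial_ne_zero _)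
        push_cast
        field_simp
      rw [h5, map_mul, hF]
      congr 1
      rw [map_add, map_one, map_natCast]
    rw [hfac]
  rw [E2, E3, E1]
  simp only [map_sub, map_mul, map_add, map_one, map_natCast]
  ring

lemma poly_rigid {p : Polynomial ℝ} (h : p = p.comp (X - 1)) (h0 : p.eval 0 = 0) :
    p = 0 := by
  have key : ∀ m : ℕ, p.eval (m : ℝ) = 0 := by
    intro m
    induction m with
    | zero => simpa using h0
    | succ m ih =>
      have : p.eval ((m + 1 : ℕ) : ℝ) = p.eval (((m + 1 : ℕ) : ℝ) - 1) := by
        conv_lhs => rw [h]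
        rw [eval_comp]
        simp
      rw [this]
      push_cast
      simpa using ih
  refine Polynomial.eq_zero_of_infinite_isRoot p ?_
  exact Set.infinite_of_injective_forall_mem Nat.cast_injective key

lemma Apoly_eval_zero (z : ℝ) (k : ℕ) :
    (Apoly z k).eval 0 = if k = 0 then 1 else 0 := by
  rcases k with _ | k
  · simp [Apoly]
  · simp [Apoly]

lemma Tpoly_eval (y z : ℝ) (n : ℕ) (x : ℝ) :
    (Tpoly y z n).eval x = Breal (x + y) z n := by
  unfold Tpoly Breal
  rw [eval_mul, Pl_eval, eval_C]
  have h : ∏ i ∈ Finset.range n, (x + (y + ((n : ℝ) * z - i)))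
      = ∏ i ∈ Finset.range n, (x + y + ((n : ℝ) * z - i)) :=
    Finset.prod_congr rfl fun i _ => by ring
  rw [h]
  ring

theorem RHpoly (z : ℝ) : ∀ n : ℕ, ∀ y : ℝ,
    (∑ k ∈ Finset.range (n + 1), Apoly z k * C (Breal y z (n - k))) = Tpoly y z n := by
  intro n
  induction n with
  | zero =>
    intro y
    simp [Apoly, Tpoly, Breal, Pl]
  | succ m IH =>
    intro y
    set p : Polynomial ℝ :=
      (∑ k ∈ Finset.range (m + 2), Apoly z k * C (Breal y z (m + 1 - k)))
        - Tpoly y z (m + 1) with hp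
    have hsum : (∑ k ∈ Finset.range (m + 2), Apoly z k * C (Breal y z (m + 1 - k)))
        = (∑ k ∈ Finset.range (m + 2), (Apoly z k).comp (X - 1) * C (Breal y z (m + 1 - k)))
          + (Tpoly y z m).comp (X + C (z - 1)) := by
      rw [Finset.sum_range_succ' _ (m + 1), Finset.sum_range_succ' _ (m + 1)]
      have hA0 : (Apoly z 0).comp (X - 1) = Apoly z 0 := by simp [Apoly]
      rw [hA0]
      have hstep : ∀ k, Apoly z (k + 1) * C (Breal y z (m + 1 - (k + 1)))
          = (Apoly z (k + 1)).comp (X - 1) * C (Breal y z (m + 1 - (k + 1)))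
            + (Apoly z k).comp (X + C (z - 1)) * C (Breal y z (m - k)) := by
        intro k
        conv_lhs => rw [Apoly_rec z (k + 1) (Nat.succ_ne_zero k)]
        rw [show (k + 1 - 1 : ℕ) = k from rfl, add_mul, Nat.succ_sub_succ_eq_sub]
      rw [Finset.sum_congr rfl fun k _ => hstep k, Finset.sum_add_distrib]
      have hT : (∑ k ∈ Finset.range (m + 1), (Apoly z k).comp (X + C (z - 1))
            * C (Breal y z (m - k)))
          = (Tpoly y z m).comp (X + C (z - 1)) := by
        rw [← IH y]
        rw [Polynomial.sum_comp]
        exact Finset.sum_congr rfl fun k _ => by rw [mul_comp, C_comp]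
      rw [hT]
      ring
    have hcomp : p = p.comp (X - 1) := by
      have hpc : p.comp (X - 1) =
          (∑ k ∈ Finset.range (m + 2), (Apoly z k).comp (X - 1) * C (Breal y z (m + 1 - k)))
            - (Tpoly y z (m + 1)).comp (X - 1) := by
        rw [hp, sub_comp, Polynomial.sum_comp]
        congr 1
        exact Finset.sum_congr rfl fun k _ => by rw [mul_comp, C_comp]
      rw [hp, hpc, hsum]
      linear_combination -Tpoly_rec y z m
    have h0 : p.eval 0 = 0 := by
      rw [hp]
      simp only [eval_sub, eval_finset_sum, eval_mul, eval_C, Apoly_eval_zero, Tpoly_eval]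
      rw [Finset.sum_eq_single 0]
      · simp
      · intro b _ hb
        simp [hb]
      · intro h
        simp at h
    have : p = 0 := poly_rigid hcomp h0
    have := sub_eq_zero.mp (hp ▸ this)
    exact this

theorem RHreal (x y z : ℝ) (n : ℕ) :
    (∑ k ∈ Finset.range (n + 1), (Apoly z k).eval x * Breal y z (n - k))
      = Breal (x + y) z n := by
  have := congrArg (Polynomial.eval x) (RHpoly z n y)
  rw [eval_finset_sum, Tpoly_eval] at this
  simpa [eval_mul] using this

noncomputable def ccoef (a : ℝ) (m : ℕ) : ℝ :=
  (∏ j ∈ Finset.range (m - 1), ((m : ℝ) * a + j)) / Nat.factorial m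

noncomputable def dcoef (a : ℝ) (m : ℕ) : ℝ :=
  (∏ j ∈ Finset.range (m - 1), ((m : ℝ) * a + (j + 1))) / Nat.factorial (m - 1)

lemma prod_reflect (g : ℝ) (N : ℕ) :
    ∏ i ∈ Finset.range N, (g + ((N : ℝ) - 1 - i)) = ∏ j ∈ Finset.range N, (g + j) := by
  rw [← Finset.prod_range_reflect (fun j => g + (j : ℝ)) N]
  refine Finset.prod_congr rfl fun i hi => ?_
  have hi' := Finset.mem_range.mp hi
  have h1 : 1 ≤ N := Nat.one_le_of_lt (Nat.lt_of_le_of_lt (Nat.zero_le _) hi')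
  have h2 : i ≤ N - 1 := Nat.le_sub_one_of_lt hi'
  have hc : ((N - 1 - i : ℕ) : ℝ) = (N : ℝ) - 1 - i := by
    rw [Nat.cast_sub h2, Nat.cast_sub h1, Nat.cast_one]
  show g + ((N : ℝ) - 1 - i) = g + ((N - 1 - i : ℕ) : ℝ)
  rw [hc]

lemma cast_pred {m : ℕ} (hm : m ≠ 0) : ((m - 1 : ℕ) : ℝ) = (m : ℝ) - 1 := by
  rw [Nat.cast_sub (Nat.one_le_iff_ne_zero.mpr hm), Nat.cast_one]

lemma prod_peel_last (f : ℕ → ℝ) (m : ℕ) (hm : m ≠ 0) :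
    ∏ j ∈ Finset.range m, f j = (∏ j ∈ Finset.range (m - 1), f j) * f (m - 1) := by
  conv_lhs => rw [show m = (m - 1) + 1 by omega]
  exact Finset.prod_range_succ f (m - 1)

lemma prod_peel_first (f : ℕ → ℝ) (m : ℕ) (hm : m ≠ 0) :
    ∏ j ∈ Finset.range m, f j = (∏ j ∈ Finset.range (m - 1), f (j + 1)) * f 0 := by
  conv_lhs => rw [show m = (m - 1) + 1 by omega]
  exact Finset.prod_range_succ' f (m - 1)

lemma fact_pred (n : ℕ) (hn : n ≠ 0) :
    (Nat.factorial n : ℝ) = (n : ℝ) * (Nat.factorial (n - 1) : ℝ) := by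
  rw [← Nat.mul_factorial_pred hn]
  push_cast
  ring

lemma Aeval (a : ℝ) (m : ℕ) (hm : m ≠ 0) :
    (Apoly (a + 1) m).eval (-1) = -(ccoef a m) := by
  unfold Apoly ccoef
  rw [if_neg hm, eval_mul, eval_mul, eval_X, eval_C, Pl_eval]
  have h : ∏ i ∈ Finset.range (m - 1), (-1 + ((m : ℝ) * (a + 1) - ((i : ℝ) + 1)))
      = ∏ j ∈ Finset.range (m - 1), ((m : ℝ) * a + j) := by
    rw [← prod_reflect ((m : ℝ) * a) (m - 1)]
    refine Finset.prod_congr rfl fun i hi => ?_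
    have := Finset.mem_range.mp hi
    rw [cast_pred hm]
    ring
  rw [h]
  ring

lemma Beval_neg_one (a : ℝ) (m : ℕ) (hm : m ≠ 0) :
    Breal (-1) (a + 1) m = ((m : ℝ) * a + (m : ℝ) - 1) * ccoef a m := by
  unfold Breal ccoef
  have h : ∏ i ∈ Finset.range m, ((-1 : ℝ) + ((m : ℝ) * (a + 1) - i))
      = ∏ j ∈ Finset.range m, ((m : ℝ) * a + j) := by
    rw [← prod_reflect ((m : ℝ) * a) m]
    exact Finset.prod_congr rfl fun i hi => by ring
  rw [h, prod_peel_last (fun j => (m : ℝ) * a + j) m hm, cast_pred hm]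
  rw [mul_div_assoc]
  ring

lemma Beval_neg_two (a : ℝ) (n : ℕ) (hn : n ≠ 0) :
    Breal (-2) (a + 1) n = ((n : ℝ) * a - 1) * ccoef a n := by
  unfold Breal ccoef
  have h : ∏ i ∈ Finset.range n, ((-2 : ℝ) + ((n : ℝ) * (a + 1) - i))
      = ∏ i ∈ Finset.range n, (((n : ℝ) * a - 1) + i) := by
    rw [← prod_reflect ((n : ℝ) * a - 1) n]
    exact Finset.prod_congr rfl fun i hi => by ring
  rw [h, prod_peel_first (fun i => ((n : ℝ) * a - 1) + i) n hn]
  have h2 : ∏ j ∈ Finset.range (n - 1), ((n : ℝ) * a - 1 + ((j + 1 : ℕ) : ℝ))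
      = ∏ j ∈ Finset.range (n - 1), ((n : ℝ) * a + j) :=
    Finset.prod_congr rfl fun i hi => by push_cast; ring
  show (∏ j ∈ Finset.range (n - 1), ((n : ℝ) * a - 1 + ((j + 1 : ℕ) : ℝ)))
      * ((n : ℝ) * a - 1 + ((0 : ℕ) : ℝ)) / Nat.factorial n = _
  rw [h2]
  push_cast
  rw [mul_div_assoc]
  ring

lemma Beval_d (a : ℝ) (m : ℕ) (hm : m ≠ 0) :
    Breal a (a + 1) (m - 1) = dcoef a m := by
  unfold Breal dcoef
  congr 1
  have h2 : ∏ j ∈ Finset.range (m - 1), ((m : ℝ) * a + ((j : ℝ) + 1))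
      = ∏ j ∈ Finset.range (m - 1), (((m : ℝ) * a + 1) + j) :=
    Finset.prod_congr rfl fun i hi => by ring
  rw [h2, ← prod_reflect ((m : ℝ) * a + 1) (m - 1)]
  refine Finset.prod_congr rfl fun i hi => ?_
  have := Finset.mem_range.mp hi
  rw [cast_pred hm]
  ring

lemma Beval_nc (a : ℝ) (n : ℕ) (hn : n ≠ 0) :
    Breal (a - 1) (a + 1) (n - 1) = (n : ℝ) * ccoef a n := by
  unfold Breal ccoef
  have h : ∏ i ∈ Finset.range (n - 1), ((a - 1) + (((n - 1 : ℕ) : ℝ) * (a + 1) - i))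
      = ∏ j ∈ Finset.range (n - 1), ((n : ℝ) * a + j) := by
    rw [← prod_reflect ((n : ℝ) * a) (n - 1)]
    refine Finset.prod_congr rfl fun i hi => ?_
    have := Finset.mem_range.mp hi
    rw [cast_pred hn]
    ring
  rw [h, fact_pred n hn]
  have hne : (Nat.factorial (n - 1) : ℝ) ≠ 0 := Nat.cast_ne_zero.mpr (Nat.factorial_ne_zero _)
  have hnne : (n : ℝ) ≠ 0 := Nat.cast_ne_zero.mpr hn
  field_simp

open PowerSeries

/-- The formal power series
`y(x;a) = 1 - ∑_{n ≥ 1} (∏_{j=0}^{n-2}(na+j)/n!) x^n`. -/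
noncomputable def ySeries (a : ℝ) : PowerSeries ℝ :=
  PowerSeries.mk (fun n => if n = 0 then (1 : ℝ) else
    -((∏ j ∈ Finset.range (n - 1), ((n : ℝ) * a + j)) / Nat.factorial n))

/-- The formal power series `φ_{-1}(x;a) = ∑_{m ≥ 1} (∏_{j=1}^{m-1}(ma+j)/(m-1)!) x^m/m`. -/
noncomputable def phiMinusOne (a : ℝ) : PowerSeries ℝ :=
  PowerSeries.mk (fun m => if m = 0 then 0 else
    ((∏ j ∈ Finset.range (m - 1), ((m : ℝ) * a + (j + 1))) / Nat.factorial (m - 1)) / m)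

noncomputable def zser (a : ℝ) : PowerSeries ℝ :=
  PowerSeries.mk (fun m => if m = 0 then 0 else ccoef a m)

lemma coeff_zser (a : ℝ) (m : ℕ) :
    PowerSeries.coeff m (zser a) = if m = 0 then 0 else ccoef a m := coeff_mk _ _

lemma ySeries_sub_one (a : ℝ) : ySeries a - 1 = -zser a := by
  ext n
  simp only [map_sub, map_neg, coeff_zser, ySeries, coeff_mk, ccoef]
  rcases n with _ | n
  · simp [coeff_zero_eq_constantCoeff]
  · simp [PowerSeries.coeff_one, Nat.succ_ne_zero]

lemma coeff_phi (a : ℝ) (m : ℕ) :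
    PowerSeries.coeff m (phiMinusOne a) = if m = 0 then 0 else dcoef a m / m := by
  simp [phiMinusOne, coeff_mk, dcoef]

lemma constantCoeff_zser (a : ℝ) : PowerSeries.constantCoeff (zser a) = 0 := by
  rw [← coeff_zero_eq_constantCoeff, coeff_zser]
  simp

lemma coeff_zser_pow (a : ℝ) {m k : ℕ} (h : m < k) : PowerSeries.coeff m (zser a ^ k) = 0 := by
  have hdvd : (X : PowerSeries ℝ) ^ k ∣ zser a ^ k :=
    pow_dvd_pow_of_dvd (X_dvd_iff.mpr (constantCoeff_zser a)) k
  exact (X_pow_dvd_iff.mp hdvd) m h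

noncomputable def Lser (a : ℝ) : PowerSeries ℝ :=
  PowerSeries.mk fun n => ∑ k ∈ Finset.Icc 1 n, ((k : ℝ))⁻¹ * PowerSeries.coeff n (zser a ^ k)

noncomputable def Spart (a : ℝ) (N : ℕ) : PowerSeries ℝ :=
  ∑ k ∈ Finset.Icc 1 N, ((k : ℝ))⁻¹ • zser a ^ k

lemma coeff_L_eq_S (a : ℝ) {n N : ℕ} (h : n ≤ N) :
    PowerSeries.coeff n (Lser a) = PowerSeries.coeff n (Spart a N) := by
  calc PowerSeries.coeff n (Lser a) = ∑ k ∈ Finset.Icc 1 n, ((k : ℝ))⁻¹ * PowerSeries.coeff n (zser a ^ k) :=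
        coeff_mk _ _
    _ = ∑ k ∈ Finset.Icc 1 N, ((k : ℝ))⁻¹ * PowerSeries.coeff n (zser a ^ k) := by
        refine Finset.sum_subset (Finset.Icc_subset_Icc_right h) fun k hk hnk => ?_
        have hn : n < k := by
          simp only [Finset.mem_Icc] at hk hnk
          omega
        rw [coeff_zser_pow a hn, mul_zero]
    _ = PowerSeries.coeff n (Spart a N) := by
        rw [Spart, map_sum]
        exact (Finset.sum_congr rfl fun k _ => by rw [LinearMap.map_smul, smul_eq_mul]).symm

lemma deriv_S (a : ℝ) (N : ℕ) :
    (1 - zser a) * (d⁄dX ℝ) (Spart a N) = (1 - zser a ^ N) * (d⁄dX ℝ) (zser a) := by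
  have h1 : (d⁄dX ℝ) (Spart a N) = (∑ j ∈ Finset.range N, zser a ^ j) * (d⁄dX ℝ) (zser a) := by
    rw [Spart, map_sum]
    have hterm : ∀ k ∈ Finset.Icc 1 N, (d⁄dX ℝ) (((k : ℝ))⁻¹ • zser a ^ k)
        = zser a ^ (k - 1) * (d⁄dX ℝ) (zser a) := by
      intro k hk
      have hk1 : 1 ≤ k := (Finset.mem_Icc.mp hk).1
      have hkne : ((k : ℝ)) ≠ 0 := Nat.cast_ne_zero.mpr (by omega)
      rw [Derivation.map_smul, Derivation.leibniz_pow, ← Nat.cast_smul_eq_nsmul ℝ,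
        smul_smul, inv_mul_cancel₀ hkne, one_smul, smul_eq_mul]
    rw [Finset.sum_congr rfl hterm]
    rw [← Finset.Ico_add_one_right_eq_Icc, Finset.sum_Ico_eq_sum_range]
    rw [Finset.sum_mul]
    refine Finset.sum_congr (by norm_num) fun j _ => ?_
    rw [show 1 + j - 1 = j by omega]
  rw [h1, ← mul_assoc]
  have h2 : (1 - zser a) * (∑ j ∈ Finset.range N, zser a ^ j) = 1 - zser a ^ N := by
    have := geom_sum_mul (zser a) N
    linear_combination -this
  rw [h2]

lemma deriv_L (a : ℝ) :
    (1 - zser a) * (d⁄dX ℝ) (Lser a) = (d⁄dX ℝ) (zser a) := by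
  ext n
  have key : ∀ j, j ≤ n → PowerSeries.coeff j ((d⁄dX ℝ) (Lser a))
      = PowerSeries.coeff j ((d⁄dX ℝ) (Spart a (n + 2))) := by
    intro j hj
    rw [PowerSeries.coeff_derivative, PowerSeries.coeff_derivative,
      coeff_L_eq_S a (show j + 1 ≤ n + 2 by omega)]
  have hmul : PowerSeries.coeff n ((1 - zser a) * (d⁄dX ℝ) (Lser a))
      = PowerSeries.coeff n ((1 - zser a) * (d⁄dX ℝ) (Spart a (n + 2))) := by
    rw [PowerSeries.coeff_mul, PowerSeries.coeff_mul]
    refine Finset.sum_congr rfl fun p hp => ?_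
    have hp2 := Finset.HasAntidiagonal.mem_antidiagonal.mp hp
    rw [key p.2 (by omega)]
  have hzero : PowerSeries.coeff n (zser a ^ (n + 2) * (d⁄dX ℝ) (zser a)) = 0 := by
    rw [PowerSeries.coeff_mul]
    refine Finset.sum_eq_zero fun p hp => ?_
    have hp2 := Finset.HasAntidiagonal.mem_antidiagonal.mp hp
    rw [coeff_zser_pow a (show p.1 < n + 2 by omega), zero_mul]
  rw [hmul, deriv_S, sub_mul, one_mul, map_sub, hzero, sub_zero]

lemma Breal_zero (y z : ℝ) : Breal y z 0 = 1 := by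
  simp [Breal]

lemma KC (a : ℝ) (n : ℕ) (hn : n ≠ 0) :
    ∑ k ∈ Finset.Ico 1 n,
        (((n - k : ℕ) : ℝ) * a + ((n - k : ℕ) : ℝ) - 1) * (ccoef a k * ccoef a (n - k))
      = ((n : ℝ) - 1) * ccoef a n := by
  have H := RHreal (-1) (-1) (a + 1) n
  rw [Finset.sum_range_succ, Finset.range_eq_Ico,
    Finset.sum_eq_sum_Ico_succ_bot (Nat.pos_of_ne_zero hn)] at H
  have h0 : (Apoly (a + 1) 0).eval (-1) * Breal (-1) (a + 1) (n - 0)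
      = Breal (-1) (a + 1) n := by
    simp [Apoly]
  have hn' : (Apoly (a + 1) n).eval (-1) * Breal (-1) (a + 1) (n - n)
      = -(ccoef a n) := by
    rw [Nat.sub_self, Breal_zero, Aeval a n hn, mul_one]
  rw [show (-1 : ℝ) + -1 = -2 by norm_num] at H
  rw [h0, hn', Beval_neg_two a n hn] at H
  have hsum : ∑ k ∈ Finset.Ico 1 n, (Apoly (a + 1) k).eval (-1) * Breal (-1) (a + 1) (n - k)
      = -∑ k ∈ Finset.Ico 1 n,
          (((n - k : ℕ) : ℝ) * a + ((n - k : ℕ) : ℝ) - 1) * (ccoef a k * ccoef a (n - k)) := by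
    rw [← Finset.sum_neg_distrib]
    refine Finset.sum_congr rfl fun k hk => ?_
    have hk' := Finset.mem_Ico.mp hk
    have hk0 : k ≠ 0 := by omega
    have hnk : (n - k : ℕ) ≠ 0 := by omega
    rw [Aeval a k hk0, Beval_neg_one a (n - k) hnk]
    ring
  rw [hsum, Beval_neg_one a n hn] at H
  linear_combination -H

lemma KA (a : ℝ) (n : ℕ) (hn : n ≠ 0) :
    ∑ k ∈ Finset.Ico 1 n, ccoef a k * dcoef a (n - k)
      = dcoef a n - (n : ℝ) * ccoef a n := by
  have H := RHreal (-1) a (a + 1) (n - 1)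
  rw [show n - 1 + 1 = n by omega] at H
  rw [Finset.range_eq_Ico, Finset.sum_eq_sum_Ico_succ_bot (Nat.pos_of_ne_zero hn)] at H
  have h0 : (Apoly (a + 1) 0).eval (-1) * Breal a (a + 1) (n - 1 - 0) = dcoef a n := by
    simp only [Nat.sub_zero]
    rw [show (Apoly (a + 1) 0) = 1 from if_pos rfl, eval_one, one_mul, Beval_d a n hn]
  have hx : (-1 : ℝ) + a = a - 1 := by ring
  rw [h0, hx, Beval_nc a n hn] at H
  have hsum : ∑ k ∈ Finset.Ico 1 n, (Apoly (a + 1) k).eval (-1) * Breal a (a + 1) (n - 1 - k)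
      = -∑ k ∈ Finset.Ico 1 n, ccoef a k * dcoef a (n - k) := by
    rw [← Finset.sum_neg_distrib]
    refine Finset.sum_congr rfl fun k hk => ?_
    have hk' := Finset.mem_Ico.mp hk
    have hk0 : k ≠ 0 := by omega
    have hnk : (n - k : ℕ) ≠ 0 := by omega
    rw [show n - 1 - k = n - k - 1 by omega, Aeval a k hk0, Beval_d a (n - k) hnk]
    ring
  rw [hsum] at H
  linear_combination -H

lemma PA (a : ℝ) (n : ℕ) (hn : n ≠ 0) :
    a * dcoef a n = ((n : ℝ) * a + (n : ℝ) - 1) * ccoef a n := by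
  unfold dcoef ccoef
  have e1 := prod_peel_first (fun j => (n : ℝ) * a + j) n hn
  have e2 := prod_peel_last (fun j => (n : ℝ) * a + j) n hn
  have e1' : ∏ j ∈ Finset.range (n - 1), ((n : ℝ) * a + ((j + 1 : ℕ) : ℝ))
      = ∏ j ∈ Finset.range (n - 1), ((n : ℝ) * a + (j : ℝ) + 1) :=
    Finset.prod_congr rfl fun j _ => by push_cast; ring
  rw [e1'] at e1
  have hA : ∏ j ∈ Finset.range (n - 1), ((n : ℝ) * a + ((j : ℝ) + 1))
      = ∏ j ∈ Finset.range (n - 1), ((n : ℝ) * a + (j : ℝ) + 1) :=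
    Finset.prod_congr rfl fun j _ => by ring
  rw [hA]
  rw [cast_pred hn] at e2
  rw [fact_pred n hn]
  have h1 : (Nat.factorial (n - 1) : ℝ) ≠ 0 := Nat.cast_ne_zero.mpr (Nat.factorial_ne_zero _)
  have h2 : (n : ℝ) ≠ 0 := Nat.cast_ne_zero.mpr hn
  field_simp
  simp only [mul_comm a (n : ℝ)]
  linear_combination e2 - e1

lemma IdC (a : ℝ) (m : ℕ) (hm : m ≠ 0) :
    (m : ℝ) * ccoef a m
        - (a + 1) * ∑ k ∈ Finset.Ico 1 m, ccoef a k * (ccoef a (m - k) * ((m - k : ℕ) : ℝ))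
      = ccoef a m - ∑ k ∈ Finset.Ico 1 m, ccoef a k * ccoef a (m - k) := by
  have H := KC a m hm
  have e : ∑ k ∈ Finset.Ico 1 m,
        (((m - k : ℕ) : ℝ) * a + ((m - k : ℕ) : ℝ) - 1) * (ccoef a k * ccoef a (m - k))
      = (a + 1) * (∑ k ∈ Finset.Ico 1 m, ccoef a k * (ccoef a (m - k) * ((m - k : ℕ) : ℝ)))
        - ∑ k ∈ Finset.Ico 1 m, ccoef a k * ccoef a (m - k) := by
    rw [Finset.mul_sum, ← Finset.sum_sub_distrib]
    exact Finset.sum_congr rfl fun k _ => by ring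
  rw [e] at H
  linear_combination -H

lemma IdA (a : ℝ) (m : ℕ) (hm : m ≠ 0) :
    dcoef a m - (a + 1) * ∑ k ∈ Finset.Ico 1 m, ccoef a k * dcoef a (m - k)
      = ccoef a m := by
  have H := KA a m hm
  have H2 := PA a m hm
  rw [H]
  linear_combination -H2

lemma coeff_u (a : ℝ) (k : ℕ) : PowerSeries.coeff k (1 - PowerSeries.C (a + 1) * zser a)
    = (if k = 0 then (1 : ℝ) else 0) - (a + 1) * (if k = 0 then 0 else ccoef a k) := by
  rw [map_sub, PowerSeries.coeff_one, PowerSeries.coeff_C_mul, coeff_zser]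

lemma ODEz (a : ℝ) :
    PowerSeries.X * ((1 - PowerSeries.C (a + 1) * zser a) * (d⁄dX ℝ) (zser a)) = zser a - zser a ^ 2 := by
  ext n
  rcases n with _ | n
  · rw [coeff_zero_X_mul, map_sub, coeff_zser, coeff_zser_pow a (by norm_num : (0 : ℕ) < 2)]
    simp
  · rw [coeff_succ_X_mul, map_sub, PowerSeries.coeff_mul,
      Finset.Nat.sum_antidiagonal_eq_sum_range_succ_mk]
    rw [pow_two, PowerSeries.coeff_mul, Finset.Nat.sum_antidiagonal_eq_sum_range_succ_mk]
    have hD : ∀ j : ℕ, PowerSeries.coeff j ((d⁄dX ℝ) (zser a)) = ccoef a (j + 1) * ((j : ℝ) + 1) := by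
      intro j
      rw [PowerSeries.coeff_derivative, coeff_zser, if_neg (Nat.succ_ne_zero j)]
    have hL : ∑ k ∈ Finset.range (n + 1),
          PowerSeries.coeff k (1 - PowerSeries.C (a + 1) * zser a) * PowerSeries.coeff (n - k) ((d⁄dX ℝ) (zser a))
        = ccoef a (n + 1) * ((n : ℝ) + 1)
          - (a + 1) * ∑ k ∈ Finset.Ico 1 (n + 1),
              ccoef a k * (ccoef a (n + 1 - k) * ((n + 1 - k : ℕ) : ℝ)) := by
      rw [Finset.range_eq_Ico, Finset.sum_eq_sum_Ico_succ_bot (Nat.succ_pos n)]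
      rw [coeff_u a 0, hD (n - 0), Nat.sub_zero, if_pos rfl, if_pos rfl]
      have hS : ∑ k ∈ Finset.Ico (0 + 1) (n + 1),
            PowerSeries.coeff k (1 - PowerSeries.C (a + 1) * zser a) * PowerSeries.coeff (n - k) ((d⁄dX ℝ) (zser a))
          = -((a + 1) * ∑ k ∈ Finset.Ico 1 (n + 1),
              ccoef a k * (ccoef a (n + 1 - k) * ((n + 1 - k : ℕ) : ℝ))) := by
        rw [Finset.mul_sum, ← Finset.sum_neg_distrib, show (0 + 1 : ℕ) = 1 from rfl]
        refine Finset.sum_congr rfl fun k hk => ?_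
        have hk' := Finset.mem_Ico.mp hk
        rw [coeff_u a k, hD (n - k), if_neg (by omega), if_neg (by omega)]
        rw [show n - k + 1 = n + 1 - k by omega]
        have hcast : ((n - k : ℕ) : ℝ) + 1 = ((n + 1 - k : ℕ) : ℝ) := by
          rw [show n + 1 - k = (n - k) + 1 by omega]
          push_cast
          ring
        rw [hcast]
        ring
      rw [hS]
      ring
    rw [hL, coeff_zser, if_neg (Nat.succ_ne_zero n)]
    have hR : ∑ k ∈ Finset.range (n + 1 + 1),
          PowerSeries.coeff k (zser a) * PowerSeries.coeff (n + 1 - k) (zser a)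
        = ∑ k ∈ Finset.Ico 1 (n + 1), ccoef a k * ccoef a (n + 1 - k) := by
      rw [Finset.sum_range_succ, coeff_zser, Nat.sub_self, coeff_zser, if_pos rfl, mul_zero,
        add_zero]
      rw [Finset.range_eq_Ico, Finset.sum_eq_sum_Ico_succ_bot (Nat.succ_pos n)]
      rw [coeff_zser, if_pos rfl, zero_mul, zero_add]
      refine Finset.sum_congr rfl fun k hk => ?_
      have hk' := Finset.mem_Ico.mp hk
      rw [coeff_zser, coeff_zser, if_neg (by omega), if_neg (by omega)]
    rw [hR]
    have := IdC a (n + 1) (Nat.succ_ne_zero n)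
    push_cast at this ⊢
    linear_combination this

lemma ODEphi (a : ℝ) :
    PowerSeries.X * ((1 - PowerSeries.C (a + 1) * zser a) * (d⁄dX ℝ) (phiMinusOne a)) = zser a := by
  ext n
  rcases n with _ | n
  · rw [coeff_zero_X_mul, coeff_zser]
    simp
  · rw [coeff_succ_X_mul, PowerSeries.coeff_mul,
      Finset.Nat.sum_antidiagonal_eq_sum_range_succ_mk]
    have hD : ∀ j : ℕ, PowerSeries.coeff j ((d⁄dX ℝ) (phiMinusOne a)) = dcoef a (j + 1) := by
      intro j
      rw [PowerSeries.coeff_derivative, coeff_phi, if_neg (Nat.succ_ne_zero j)]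
      have : ((j + 1 : ℕ) : ℝ) ≠ 0 := Nat.cast_ne_zero.mpr (Nat.succ_ne_zero j)
      push_cast at this ⊢
      field_simp
    have hL : ∑ k ∈ Finset.range (n + 1),
          PowerSeries.coeff k (1 - PowerSeries.C (a + 1) * zser a) * PowerSeries.coeff (n - k) ((d⁄dX ℝ) (phiMinusOne a))
        = dcoef a (n + 1)
          - (a + 1) * ∑ k ∈ Finset.Ico 1 (n + 1), ccoef a k * dcoef a (n + 1 - k) := by
      rw [Finset.range_eq_Ico, Finset.sum_eq_sum_Ico_succ_bot (Nat.succ_pos n)]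
      rw [coeff_u a 0, hD (n - 0), Nat.sub_zero, if_pos rfl, if_pos rfl]
      have hS : ∑ k ∈ Finset.Ico (0 + 1) (n + 1),
            PowerSeries.coeff k (1 - PowerSeries.C (a + 1) * zser a) * PowerSeries.coeff (n - k) ((d⁄dX ℝ) (phiMinusOne a))
          = -((a + 1) * ∑ k ∈ Finset.Ico 1 (n + 1), ccoef a k * dcoef a (n + 1 - k)) := by
        rw [Finset.mul_sum, ← Finset.sum_neg_distrib, show (0 + 1 : ℕ) = 1 from rfl]
        refine Finset.sum_congr rfl fun k hk => ?_
        have hk' := Finset.mem_Ico.mp hk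
        rw [coeff_u a k, hD (n - k), if_neg (by omega), if_neg (by omega)]
        rw [show n - k + 1 = n + 1 - k by omega]
        ring
      rw [hS]
      ring
    rw [hL, coeff_zser, if_neg (Nat.succ_ne_zero n)]
    exact IdA a (n + 1) (Nat.succ_ne_zero n)

lemma one_sub_z_ne (a : ℝ) : (1 - zser a) ≠ 0 := by
  intro h
  have := congrArg (PowerSeries.constantCoeff) h
  rw [map_sub, map_one, constantCoeff_zser] at this
  norm_num at this

lemma u_ne (a : ℝ) : (1 - PowerSeries.C (a + 1) * zser a) ≠ 0 := by
  intro h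
  have := congrArg (PowerSeries.constantCoeff) h
  rw [map_sub, map_one, map_mul, constantCoeff_zser, constantCoeff_C] at this
  norm_num at this

lemma DL_eq_Dphi (a : ℝ) : (d⁄dX ℝ) (Lser a) = (d⁄dX ℝ) (phiMinusOne a) := by
  have hz : (d⁄dX ℝ) (zser a) = (1 - zser a) * (d⁄dX ℝ) (Lser a) := (deriv_L a).symm
  have h1 := ODEz a
  rw [hz] at h1
  have h2 : (1 - zser a) * (PowerSeries.X * ((1 - PowerSeries.C (a + 1) * zser a) * (d⁄dX ℝ) (Lser a)))
      = (1 - zser a) * zser a := by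
    linear_combination h1
  have h3 : PowerSeries.X * ((1 - PowerSeries.C (a + 1) * zser a) * (d⁄dX ℝ) (Lser a)) = zser a :=
    mul_left_cancel₀ (one_sub_z_ne a) h2
  have h4 := h3.trans (ODEphi a).symm
  have h5 := mul_left_cancel₀ (PowerSeries.X_ne_zero :
    (PowerSeries.X : PowerSeries ℝ) ≠ 0) h4
  exact mul_left_cancel₀ (u_ne a) h5

lemma coeff_L_eq_phi (a : ℝ) (n : ℕ) (hn : 1 ≤ n) :
    PowerSeries.coeff n (Lser a) = PowerSeries.coeff n (phiMinusOne a) := by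
  have h := congrArg (PowerSeries.coeff (n - 1)) (DL_eq_Dphi a)
  rw [PowerSeries.coeff_derivative, PowerSeries.coeff_derivative,
    show n - 1 + 1 = n by omega] at h
  have hne : ((n - 1 : ℕ) : ℝ) + 1 ≠ 0 := by positivity
  exact mul_right_cancel₀ hne h

/-- `-log y(x;a) = φ_{-1}(x;a)` as formal power series: for every `n ≥ 1`, the `x^n`
coefficient of the formal logarithm `log y = ∑_{k ≥ 1} (-1)^{k-1}(y-1)^k/k` (a finite sum
in each coefficient, since `y - 1` has positive order) equals minus the `x^n` coefficient
of `φ_{-1}(x;a)`. -/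
theorem stmt19 (a : ℝ) (n : ℕ) (hn : 1 ≤ n) :
    ∑ k ∈ Finset.Icc 1 n,
        ((-1 : ℝ) ^ (k - 1) / k) * PowerSeries.coeff n ((ySeries a - 1) ^ k)
      = -(PowerSeries.coeff n (phiMinusOne a)) := by
  rw [← coeff_L_eq_phi a n hn]
  rw [show PowerSeries.coeff n (Lser a) = ∑ k ∈ Finset.Icc 1 n, ((k : ℝ))⁻¹ * PowerSeries.coeff n (zser a ^ k)
    from coeff_mk _ _]
  rw [← Finset.sum_neg_distrib]
  refine Finset.sum_congr rfl fun k hk => ?_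
  have hk1 : 1 ≤ k := (Finset.mem_Icc.mp hk).1
  rw [ySeries_sub_one]
  have hterm : PowerSeries.coeff n ((-zser a) ^ k) = (-1 : ℝ) ^ k * PowerSeries.coeff n (zser a ^ k) := by
    rw [neg_pow, show ((-1 : PowerSeries ℝ)) ^ k = PowerSeries.C ((-1 : ℝ) ^ k) by
      rw [map_pow, map_neg, map_one], PowerSeries.coeff_C_mul]
  rw [hterm]
  have hpow : (-1 : ℝ) ^ (k - 1) * (-1 : ℝ) ^ k = -1 := by
    rw [← pow_add]
    exact Odd.neg_one_pow ⟨k - 1, by omega⟩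
  have : ((-1 : ℝ) ^ (k - 1) / k) * ((-1 : ℝ) ^ k * PowerSeries.coeff n (zser a ^ k))
      = ((-1 : ℝ) ^ (k - 1) * (-1 : ℝ) ^ k) * ((k : ℝ))⁻¹ * PowerSeries.coeff n (zser a ^ k) := by
    ring
  rw [this, hpow]
  ring
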